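/- Let G be a finite non-trivial Cpo-group. Then either |G| is a prime number, or G is non-nilpotent and exactly two distinct primes divide |G|. -/

import Mathlib

set_option linter.unusedSectionVars false

open Subgroup
open scoped Pointwise

/-- A group `G` is a Cpo-group if the centralizer of every non-trivial element
has prime order. -/
def IsCpoGroup (G : Type*) [Group G] : Prop :=
  ∀ x : G, x ≠ 1 → (Nat.card (Subgroup.centralizer ({x} : Set G))).Prime

section Helpers

variable {G : Type*} [Group G]

private lemma mem_centralizer_self (x : G) : x ∈ centralizer ({x} : Set G) := by
  rw [mem_centralizer_iff]
  rintro h rfl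
  rfl

private lemma comm_of_cyclic {H : Type*} [Group H] [IsCyclic H] (a b : H) : a * b = b * a := by
  obtain ⟨z, hz⟩ := IsCyclic.exists_generator (α := H)
  obtain ⟨i, hi⟩ := Subgroup.mem_zpowers_iff.mp (hz a)
  obtain ⟨j, hj⟩ := Subgroup.mem_zpowers_iff.mp (hz b)
  rw [← hi, ← hj]
  exact ((Commute.refl z).zpow_zpow i j).eq

private lemma mulAut_comm_of_isCyclic {R : Type*} [Group R] [IsCyclic R] (σ τ : MulAut R) :
    σ * τ = τ * σ := by
  obtain ⟨z, hz⟩ := IsCyclic.exists_generator (α := R)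
  obtain ⟨a, ha⟩ := Subgroup.mem_zpowers_iff.mp (hz (σ z))
  obtain ⟨b, hb⟩ := Subgroup.mem_zpowers_iff.mp (hz (τ z))
  ext g
  obtain ⟨k, rfl⟩ := Subgroup.mem_zpowers_iff.mp (hz g)
  show σ (τ (z ^ k)) = τ (σ (z ^ k))
  have e1 : σ (τ (z ^ k)) = z ^ (a * (b * k)) := by
    rw [map_zpow, ← hb, ← zpow_mul, map_zpow, ← ha, ← zpow_mul]
  have e2 : τ (σ (z ^ k)) = z ^ (b * (a * k)) := by
    rw [map_zpow, ← ha, ← zpow_mul, map_zpow, ← hb, ← zpow_mul]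
  rw [e1, e2]
  ring_nf

variable [Finite G]

private lemma comm_of_prime_card {R : Subgroup G} (hR : (Nat.card R).Prime) {a b : G}
    (ha : a ∈ R) (hb : b ∈ R) : a * b = b * a := by
  haveI := Fact.mk hR
  haveI : IsCyclic ↥R := isCyclic_of_prime_card (p := Nat.card R) rfl
  have := comm_of_cyclic (⟨a, ha⟩ : R) ⟨b, hb⟩
  exact Subtype.ext_iff.mp this

private lemma cpo_eq_centralizer (hG : IsCpoGroup G) {x : G} (hx : x ≠ 1)
    {H : Subgroup G} (hle : H ≤ centralizer {x}) (hH : 1 < Nat.card H) :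
    H = centralizer ({x} : Set G) := by
  have hp := hG x hx
  have hdvd : Nat.card H ∣ Nat.card (centralizer ({x} : Set G)) := card_dvd_of_le hle
  rcases hp.eq_one_or_self_of_dvd _ hdvd with h1 | h2
  · omega
  · exact eq_of_le_of_card_ge hle (le_of_eq h2.symm)

private lemma centralizer_eq_of_prime (hG : IsCpoGroup G) {R : Subgroup G}
    (hR : (Nat.card R).Prime) {x : G} (hx : x ∈ R) (hx1 : x ≠ 1) :
    centralizer ({x} : Set G) = R := by
  have hle : R ≤ centralizer {x} := by
    intro g hg
    rw [mem_centralizer_iff]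
    rintro h rfl
    exact comm_of_prime_card hR hx hg
  exact (cpo_eq_centralizer hG hx1 hle hR.one_lt).symm

private lemma exists_ne_one_of_prime_card {R : Subgroup G} (hR : (Nat.card R).Prime) :
    ∃ x ∈ R, x ≠ (1 : G) := by
  haveI : Nontrivial ↥R := Finite.one_lt_card_iff_nontrivial.mp hR.one_lt
  obtain ⟨y, hy⟩ := exists_ne (1 : ↥R)
  exact ⟨↑y, y.2, fun h => hy (Subtype.ext h)⟩

private lemma centralizer_set_eq_of_prime (hG : IsCpoGroup G) {R : Subgroup G}
    (hR : (Nat.card R).Prime) : centralizer ((R : Set G)) = R := by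
  obtain ⟨x, hxR, hx1⟩ := exists_ne_one_of_prime_card hR
  apply le_antisymm
  · have h1 : centralizer ((R : Set G)) ≤ centralizer {x} :=
      centralizer_le (by simpa using hxR)
    rw [centralizer_eq_of_prime hG hR hxR hx1] at h1
    exact h1
  · intro g hg
    rw [mem_centralizer_iff]
    intro h hh
    exact comm_of_prime_card hR hh hg

private lemma cpo_sylow_card (hG : IsCpoGroup G) {p : ℕ} [Fact p.Prime]
    (hp : p ∣ Nat.card G) (Q : Sylow p G) : Nat.card ↥(Q : Subgroup G) = p := by
  have hpp : p.Prime := Fact.out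
  have hdvd : p ∣ Nat.card ↥(Q : Subgroup G) := by
    have h1 := Q.not_dvd_index
    have h2 := Subgroup.index_mul_card (Q : Subgroup G)
    rcases (Nat.Prime.dvd_mul hpp).mp (h2 ▸ hp) with h | h
    · exact absurd h h1
    · exact h
  haveI : Nontrivial ↥(Q : Subgroup G) :=
    Finite.one_lt_card_iff_nontrivial.mp
      (lt_of_lt_of_le hpp.one_lt (Nat.le_of_dvd Nat.card_pos hdvd))
  haveI : Nontrivial ↥(center ↥(Q : Subgroup G)) := Q.isPGroup'.center_nontrivial
  obtain ⟨z, hz⟩ := exists_ne (1 : ↥(center ↥(Q : Subgroup G)))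
  set w : G := ((z : ↥(Q : Subgroup G)) : G) with hw
  have hw1 : w ≠ 1 := by
    intro h
    apply hz
    ext
    exact h
  have hle : (Q : Subgroup G) ≤ centralizer {w} := by
    intro g hg
    rw [mem_centralizer_iff]
    rintro h rfl
    exact (congrArg Subtype.val (Subgroup.mem_center_iff.mp z.2 ⟨g, hg⟩)).symm
  have hprime := hG w hw1
  have hdvdQ : Nat.card ↥(Q : Subgroup G) ∣ Nat.card (centralizer ({w} : Set G)) :=
    card_dvd_of_le hle
  rcases hprime.eq_one_or_self_of_dvd _ hdvdQ with h | h
  · have h2 := Finite.one_lt_card_iff_nontrivial.mpr ‹Nontrivial ↥(Q : Subgroup G)›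
    omega
  · have hQp : (Nat.card ↥(Q : Subgroup G)).Prime := h ▸ hprime
    exact ((Nat.prime_dvd_prime_iff_eq hpp hQp).mp hdvd).symm

end Helpers

universe u

theorem cpo_key : ∀ (n : ℕ) (G : Type u) [Group G] [Finite G], Nat.card G = n →
    IsCpoGroup G → 1 < Nat.card G →
    ∃ R : Subgroup G, (Nat.card R).Prime ∧ ∀ S : Subgroup G, Nat.card S = Nat.card R → S = R := by
  intro n
  induction n using Nat.strong_induction_on with
  | _ n ih =>
  intro G _ _ hcard hcpo hlt
  by_cases hab : ∀ x y : G, x * y = y * x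
  · -- abelian case
    haveI : Nontrivial G := Finite.one_lt_card_iff_nontrivial.mp hlt
    obtain ⟨x, hx⟩ := exists_ne (1 : G)
    have hC : centralizer ({x} : Set G) = ⊤ := by
      rw [eq_top_iff]
      intro g _
      rw [mem_centralizer_iff]
      intro h _
      exact hab h g
    refine ⟨⊤, ?_, fun S hS => Subgroup.eq_top_of_card_eq S (by rwa [card_top] at hS)⟩
    have := hcpo x hx
    rwa [hC] at this
  · -- nonabelian case
    have hN1 : Nat.card G ≠ 1 := by omega
    set p := (Nat.card G).minFac with hp_def
    have hpp : p.Prime := Nat.minFac_prime hN1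
    haveI : Fact p.Prime := ⟨hpp⟩
    obtain ⟨P⟩ : Nonempty (Sylow p G) := Sylow.nonempty
    have hPcard : Nat.card ↥(P : Subgroup G) = p := cpo_sylow_card hcpo (Nat.minFac_dvd _) P
    have hPprime : (Nat.card ↥(P : Subgroup G)).Prime := by rw [hPcard]; exact hpp
    have hCP : centralizer ((P : Subgroup G) : Set G) = (P : Subgroup G) :=
      centralizer_set_eq_of_prime hcpo hPprime
    -- normalizer of P centralizes P
    have hNP : normalizer ((P : Subgroup G) : Set G) ≤ centralizer ((P : Subgroup G) : Set G) := by
      intro g hg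
      haveI : ((P : Subgroup G).subgroupOf (normalizer ((P : Subgroup G) : Set G))).Normal :=
        Subgroup.normal_in_normalizer
      set e := Subgroup.subgroupOfEquivOfLe (Subgroup.le_normalizer (H := (P : Subgroup G)))
      set F : ↥(normalizer ((P : Subgroup G) : Set G)) →* MulAut ↥(P : Subgroup G) :=
        (MulAut.congr e).toMonoidHom.comp MulAut.conjNormal with hF
      set σ := F ⟨g, hg⟩ with hσ
      have h1 : orderOf σ ∣ Nat.card G := by
        refine dvd_trans (orderOf_map_dvd F ⟨g, hg⟩) ?_
        exact dvd_trans (orderOf_dvd_natCard _) (Subgroup.card_subgroup_dvd_card _)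
      have h2 : orderOf σ ∣ p - 1 := by
        haveI : IsCyclic ↥(P : Subgroup G) := isCyclic_of_prime_card hPcard
        have := orderOf_dvd_natCard σ
        rwa [IsCyclic.card_mulAut, hPcard, Nat.totient_prime hpp] at this
      have h3 : σ = 1 := by
        rw [← orderOf_eq_one_iff]
        by_contra h
        have hs : (orderOf σ).minFac.Prime := Nat.minFac_prime h
        have hsN : (orderOf σ).minFac ∣ Nat.card G := dvd_trans (Nat.minFac_dvd _) h1
        have hsp : (orderOf σ).minFac ∣ p - 1 := dvd_trans (Nat.minFac_dvd _) h2
        have hple : 2 ≤ p := hpp.two_le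
        have hlow : (orderOf σ).minFac ≤ p - 1 := Nat.le_of_dvd (by omega) hsp
        have hge : p ≤ (orderOf σ).minFac := Nat.minFac_le_of_dvd hs.two_le hsN
        omega
      rw [mem_centralizer_iff]
      intro h hh
      have hfix : σ ⟨h, hh⟩ = ⟨h, hh⟩ := by rw [h3]; rfl
      have hval : ((σ ⟨h, hh⟩ : ↥(P : Subgroup G)) : G) = g * h * g⁻¹ := by
        simp [hσ, hF, e, MulAut.conjNormal_apply]
      rw [hfix] at hval
      have hval' : h = g * h * g⁻¹ := hval
      calc h * g = (g * h * g⁻¹) * g := by rw [← hval']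
        _ = g * h := by group
    -- Burnside transfer: normal p-complement K
    have hKP : Subgroup.IsComplement' (MonoidHom.transferSylow P hNP).ker (P : Subgroup G) :=
      MonoidHom.ker_transferSylow_isComplement' P hNP
    set K := (MonoidHom.transferSylow P hNP).ker with hK
    have hcardmul : Nat.card K * Nat.card ↥(P : Subgroup G) = Nat.card G := hKP.card_mul
    have hKpos : 0 < Nat.card K := Nat.card_pos
    have hKlt : Nat.card K < Nat.card G := by
      have h2 : 2 ≤ p := hpp.two_le
      calc Nat.card K < Nat.card K * 2 := by omega
        _ ≤ Nat.card K * Nat.card ↥(P : Subgroup G) := by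
            rw [hPcard]; exact Nat.mul_le_mul_left _ h2
        _ = Nat.card G := hcardmul
    have hK1 : 1 < Nat.card K := by
      rcases Nat.lt_or_ge 1 (Nat.card K) with h | h
      · exact h
      · exfalso
        have hKeq : Nat.card K = 1 := by omega
        have hNp : Nat.card G = p := by rw [← hcardmul, hKeq, one_mul, hPcard]
        haveI : IsCyclic G := isCyclic_of_prime_card hNp
        exact hab fun x y => comm_of_cyclic x y
    -- K is a Cpo-group
    have hKcpo : IsCpoGroup ↥K := by
      intro x hx
      have hx1 : (x : G) ≠ 1 := fun h => hx (Subtype.ext h)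
      have hDC := hcpo ↑x hx1
      have hceq : (centralizer ({x} : Set ↥K)) =
          (centralizer ({(x : G)} : Set G)).subgroupOf K := by
        ext g
        simp only [mem_centralizer_iff, Subgroup.mem_subgroupOf, Set.mem_singleton_iff,
          forall_eq]
        constructor
        · intro h
          exact congrArg Subtype.val h
        · intro h
          exact Subtype.ext h
      rw [hceq]
      set D := centralizer ({(x : G)} : Set G) with hD
      have hcard2 : Nat.card (D.subgroupOf K) = Nat.card ↥(D ⊓ K) := by
        rw [← Subgroup.subgroupOf_map_subtype]
        exact Nat.card_congr (Subgroup.equivMapOfInjective _ _ K.subtype_injective).toEquiv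
      have hdvd : Nat.card (D.subgroupOf K) ∣ Nat.card D := by
        rw [hcard2]; exact card_dvd_of_le inf_le_left
      have hne : Nat.card (D.subgroupOf K) ≠ 1 := by
        have hmem : x ∈ D.subgroupOf K := by
          rw [Subgroup.mem_subgroupOf]; exact mem_centralizer_self _
        intro hone
        have : D.subgroupOf K = ⊥ := Subgroup.eq_bot_of_card_eq _ hone
        rw [this] at hmem
        exact hx (Subgroup.mem_bot.mp hmem)
      rcases hDC.eq_one_or_self_of_dvd _ hdvd with h | h
      · exact absurd h hne
      · rw [h]; exact hDC
    -- apply induction hypothesis to K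
    obtain ⟨R', hR'p, hR'uniq⟩ :=
      ih (Nat.card K) (by rw [← hcard]; exact hKlt) ↥K rfl hKcpo hK1
    set R : Subgroup G := R'.map K.subtype with hRdef
    have hRcard : Nat.card R = Nat.card R' :=
      (Nat.card_congr (Subgroup.equivMapOfInjective _ _ K.subtype_injective).toEquiv).symm
    have hRprime : (Nat.card R).Prime := by rw [hRcard]; exact hR'p
    have hRK : R ≤ K := Subgroup.map_subtype_le R'
    have huniqK : ∀ T : Subgroup G, T ≤ K → Nat.card T = Nat.card R → T = R := by
      intro T hTK hTcard
      have hcardT : Nat.card (T.subgroupOf K) = Nat.card R' := by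
        have h1 : Nat.card (T.subgroupOf K) = Nat.card T :=
          Nat.card_congr (Subgroup.subgroupOfEquivOfLe hTK).toEquiv
        rw [h1, hTcard, hRcard]
      have heq : T.subgroupOf K = R' := hR'uniq _ hcardT
      calc T = (T.subgroupOf K).map K.subtype := by
              rw [Subgroup.subgroupOf_map_subtype, inf_eq_left.mpr hTK]
        _ = R := by rw [heq]
    have hRnormal : R.Normal := by
      constructor
      intro x hxR g
      have hT : (R.map (MulAut.conj g).toMonoidHom) = R := by
        apply huniqK
        · rintro _ ⟨y, hy, rfl⟩
          exact (MonoidHom.normal_ker (MonoidHom.transferSylow P hNP)).conj_mem y (hRK hy) g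
        · exact (Nat.card_congr
            (Subgroup.equivMapOfInjective _ _ (MulAut.conj g).injective).toEquiv).symm
      rw [← hT]
      exact ⟨x, hxR, rfl⟩
    refine ⟨R, hRprime, ?_⟩
    intro S hScard
    haveI : Fact (Nat.card R).Prime := ⟨hRprime⟩
    have hrd : Nat.card R ∣ Nat.card G := Subgroup.card_subgroup_dvd_card R
    have hSp : IsPGroup (Nat.card R) ↥S :=
      IsPGroup.of_card (by rw [hScard, pow_one])
    obtain ⟨Q, hSQ⟩ := hSp.exists_le_sylow
    have hQcard : Nat.card ↥(Q : Subgroup G) = Nat.card R := cpo_sylow_card hcpo hrd Q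
    have hSQeq : S = ↑Q := eq_of_le_of_card_ge hSQ (by rw [hQcard, hScard])
    have hRp : IsPGroup (Nat.card R) ↥R := IsPGroup.of_card (by rw [pow_one])
    obtain ⟨Q₀, hRQ₀⟩ := hRp.exists_le_sylow
    have hQ₀card : Nat.card ↥(Q₀ : Subgroup G) = Nat.card R := cpo_sylow_card hcpo hrd Q₀
    have hRQ₀eq : R = ↑Q₀ := eq_of_le_of_card_ge hRQ₀ (le_of_eq hQ₀card)
    obtain ⟨g, hg⟩ := MulAction.exists_smul_eq G Q₀ Q
    have hsmul : ((g • Q₀ : Sylow (Nat.card R) G) : Subgroup G) = MulAut.conj g • (Q₀ : Subgroup G) := rfl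
    have : ((g • Q₀ : Sylow (Nat.card R) G) : Subgroup G) = R := by
      rw [hsmul, ← hRQ₀eq]
      exact @Subgroup.Normal.conj_smul_eq_self _ _ g R hRnormal
    rw [hSQeq, ← hg, this]

private lemma exists_center_ne_one {G : Type*} [Group G] [Nontrivial G] [Group.IsNilpotent G] :
    ∃ z ∈ center G, z ≠ (1 : G) := by
  by_contra hcon
  push_neg at hcon
  have hall : ∀ n, Subgroup.upperCentralSeries G n = ⊥ := by
    intro n
    induction n with
    | zero => exact Subgroup.upperCentralSeries_zero G
    | succ n ihn =>
      rw [eq_bot_iff]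
      intro x hxmem
      rw [Subgroup.mem_upperCentralSeries_succ_iff] at hxmem
      have hxc : x ∈ center G := by
        rw [Subgroup.mem_center_iff]
        intro g
        have h0 := hxmem g
        rw [ihn, Subgroup.mem_bot] at h0
        have h1 : x * g * x⁻¹ = g := mul_inv_eq_one.mp h0
        calc g * x = (x * g * x⁻¹) * x := by rw [h1]
          _ = x * g := by group
      rw [Subgroup.mem_bot]
      exact hcon x hxc
  obtain ⟨n, hn⟩ := Group.IsNilpotent.nilpotent G
  obtain ⟨x, hx⟩ := exists_ne (1 : G)
  have : x ∈ Subgroup.upperCentralSeries G n := hn ▸ Subgroup.mem_top x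
  rw [hall n, Subgroup.mem_bot] at this
  exact hx this

theorem stmt_7 (G : Type*) [Group G] [Finite G] (hG : IsCpoGroup G)
    (hnt : Nat.card G ≠ 1) :
    (Nat.card G).Prime ∨
      (¬ Group.IsNilpotent G ∧ (Nat.card G).primeFactors.card = 2) := by
  have hpos : 0 < Nat.card G := Nat.card_pos
  have hlt : 1 < Nat.card G := by omega
  haveI : Nontrivial G := Finite.one_lt_card_iff_nontrivial.mp hlt
  by_cases hab : ∀ x y : G, x * y = y * x
  · left
    obtain ⟨x, hx⟩ := exists_ne (1 : G)
    have hC : centralizer ({x} : Set G) = ⊤ := by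
      rw [eq_top_iff]
      intro g _
      rw [mem_centralizer_iff]
      intro h _
      exact hab h g
    have := hG x hx
    rwa [hC, card_top] at this
  · right
    have hcenter_small : ∀ z : G, z ∈ center G → z ≠ 1 → False := by
      intro z hz hz1
      apply hab
      intro x y
      have hcen : ∀ x : G, x ∈ center G := by
        intro x
        by_cases hx1 : x = 1
        · rw [hx1]; exact (center G).one_mem
        · have hle : center G ≤ centralizer {x} := center_le_centralizer _
          have hltc : 1 < Nat.card (center G) := by
            apply Finite.one_lt_card_iff_nontrivial.mpr
            exact ⟨⟨⟨z, hz⟩, 1, fun h => hz1 (by simpa [Subtype.ext_iff] using h)⟩⟩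
          have heq := cpo_eq_centralizer hG hx1 hle hltc
          exact heq ▸ mem_centralizer_self x
      exact Subgroup.mem_center_iff.mp (hcen y) x
    constructor
    · intro hnil
      obtain ⟨z, hz, hz1⟩ := exists_center_ne_one (G := G)
      exact hcenter_small z hz hz1
    · obtain ⟨R, hRp, hRuniq⟩ := cpo_key (Nat.card G) G rfl hG hlt
      have hRnormal : R.Normal := by
        constructor
        intro x hxR g
        have hT : (R.map (MulAut.conj g).toMonoidHom) = R :=
          hRuniq _ ((Nat.card_congr
            (Subgroup.equivMapOfInjective _ _ (MulAut.conj g).injective).toEquiv).symm)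
        rw [← hT]
        exact ⟨x, hxR, rfl⟩
      haveI := hRnormal
      haveI : Fact (Nat.card R).Prime := ⟨hRp⟩
      have hRne : R ≠ ⊤ := by
        intro h
        have hcG : Nat.card G = Nat.card R := by rw [h, card_top]
        haveI : IsCyclic G := isCyclic_of_prime_card hcG
        exact hab fun a b => comm_of_cyclic a b
      have hindmul : R.index * Nat.card R = Nat.card G := Subgroup.index_mul_card R
      have hind1 : R.index ≠ 1 := fun h => hRne (Subgroup.index_eq_one.mp h)
      have hrd : Nat.card R ∣ Nat.card G := Subgroup.card_subgroup_dvd_card R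
      have hRpgroup : IsPGroup (Nat.card R) ↥R := IsPGroup.of_card (by rw [pow_one])
      obtain ⟨Q₀, hRQ₀⟩ := hRpgroup.exists_le_sylow
      have hQ₀card : Nat.card ↥(Q₀ : Subgroup G) = Nat.card R := cpo_sylow_card hG hrd Q₀
      have hRQ₀eq : R = ↑Q₀ := eq_of_le_of_card_ge hRQ₀ (le_of_eq hQ₀card)
      have hnotdvd : ¬ Nat.card R ∣ R.index := by
        have := Q₀.not_dvd_index
        rwa [← hRQ₀eq] at this
      have hcop : Nat.Coprime (Nat.card R) R.index :=
        (Nat.Prime.coprime_iff_not_dvd hRp).mpr hnotdvd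
      obtain ⟨H, hH⟩ := Subgroup.exists_right_complement'_of_coprime hcop
      have hHcard : Nat.card H = R.index := (hH.symm.index_eq_card).symm
      have hHgt : 1 < Nat.card H := by
        rw [hHcard]
        have hne0 : R.index ≠ 0 := Subgroup.index_ne_zero_of_finite
        omega
      have hCR : centralizer ((R : Set G)) = R := centralizer_set_eq_of_prime hG hRp
      haveI : IsCyclic ↥R := isCyclic_of_prime_card (p := Nat.card R) rfl
      have hker : ∀ u : G, MulAut.conjNormal (H := R) u = 1 → u ∈ R := by
        intro u hu
        rw [← hCR, mem_centralizer_iff]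
        intro t ht
        have h2 := congrArg (fun σ : MulAut ↥R => ((σ ⟨t, ht⟩ : ↥R) : G)) hu
        simp only [MulAut.conjNormal_apply, MulAut.one_apply] at h2
        calc t * u = (u * t * u⁻¹) * u := by rw [h2]
          _ = u * t := by group
      have hHab : ∀ a b : G, a ∈ H → b ∈ H → a * b = b * a := by
        intro a b haH hbH
        have hcomm : MulAut.conjNormal (H := R) (a * b) = MulAut.conjNormal (H := R) (b * a) := by
          rw [map_mul, map_mul]
          exact mulAut_comm_of_isCyclic _ _
        have hmem : (a * b) * (b * a)⁻¹ ∈ R := by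
          apply hker
          rw [map_mul, map_inv, hcomm]
          group
        have hmemH : (a * b) * (b * a)⁻¹ ∈ H :=
          H.mul_mem (H.mul_mem haH hbH) (H.inv_mem (H.mul_mem hbH haH))
        have hone : (a * b) * (b * a)⁻¹ = 1 := by
          have hdis := hH.disjoint
          have := hdis.le_bot (⟨hmem, hmemH⟩ : (a * b) * (b * a)⁻¹ ∈ R ⊓ H)
          exact Subgroup.mem_bot.mp this
        exact mul_inv_eq_one.mp hone
      obtain ⟨h0, hh0H, hh01⟩ : ∃ h ∈ H, h ≠ (1 : G) := by
        haveI : Nontrivial ↥H := Finite.one_lt_card_iff_nontrivial.mp hHgt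
        obtain ⟨y, hy⟩ := exists_ne (1 : ↥H)
        exact ⟨↑y, y.2, fun h => hy (Subtype.ext h)⟩
      have hHle : H ≤ centralizer {h0} := by
        intro g hg
        rw [mem_centralizer_iff]
        rintro t rfl
        exact hHab t g hh0H hg
      have hHeq := cpo_eq_centralizer hG hh01 hHle hHgt
      have hHprime : (Nat.card H).Prime := by rw [hHeq]; exact hG h0 hh01
      have hNrq : Nat.card G = Nat.card R * Nat.card H := (hH.card_mul).symm
      have hrq : Nat.card R ≠ Nat.card H := by
        intro h
        exact hnotdvd (by rw [h, hHcard])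
      rw [hNrq, Nat.primeFactors_mul hRp.pos.ne' hHprime.pos.ne',
        hRp.primeFactors, hHprime.primeFactors,
        Finset.card_union_of_disjoint (by simp [hrq])]
      simp
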